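/- Fix a fixed-design Cox partial likelihood with score U and information matrix J, with covariates bounded by |z_i^j| ≤ K₁ for all i, j. Let β₀ ∈ ℝ^p with support T₀ := {j : β₀ⱼ ≠ 0} of cardinality S ≥ 1, and let β̂ ∈ ℝ^p and γ ≥ 0 satisfy ‖U(β₀)‖_∞ ≤ γ, ‖U(β̂)‖_∞ ≤ γ, and ‖β̂‖₁ ≤ ‖β₀‖₁. If the restricted eigenvalue satisfies RE(T₀; J(β₀)) > 0, then ‖β̂ − β₀‖₂² ≤ 4γ‖β₀‖₁ exp(4K₁‖β₀‖₁) / RE(T₀; J(β₀))². -/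

import Mathlib

open Matrix Finset

noncomputable def l1 {p : ℕ} (h : Fin p → ℝ) : ℝ := ∑ j, |h j|
noncomputable def l2 {p : ℕ} (h : Fin p → ℝ) : ℝ := Real.sqrt (∑ j, (h j) ^ 2)
noncomputable def lqNorm {p : ℕ} (q : ℝ) (h : Fin p → ℝ) : ℝ := (∑ j, |h j| ^ q) ^ (1 / q)
noncomputable def linf {p : ℕ} (h : Fin p → ℝ) : ℝ := ⨆ j, |h j|
def restr {p : ℕ} (T : Finset (Fin p)) (h : Fin p → ℝ) : Fin p → ℝ :=
  fun j => if j ∈ T then h j else 0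
def coneC {p : ℕ} (T : Finset (Fin p)) (h : Fin p → ℝ) : Prop :=
  l1 (restr Tᶜ h) ≤ l1 (restr T h)
noncomputable def quad {p : ℕ} (M : Matrix (Fin p) (Fin p) ℝ) (h : Fin p → ℝ) : ℝ :=
  h ⬝ᵥ M.mulVec h

/-- `S⁰_i(β) = Σ_{k ∈ R_i} exp(z_kᵀβ)` for the fixed-design Cox partial likelihood. -/
noncomputable def coxS0 {n p : ℕ} (z : Fin n → Fin p → ℝ) (R : Fin n → Finset (Fin n))
    (i : Fin n) (β : Fin p → ℝ) : ℝ :=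
  ∑ k ∈ R i, Real.exp (z k ⬝ᵥ β)

/-- The score `U(β) = (1/n) Σ_{i ∈ D} (z_i − S¹_i(β)/S⁰_i(β))`. -/
noncomputable def coxU {n p : ℕ} (z : Fin n → Fin p → ℝ) (D : Finset (Fin n))
    (R : Fin n → Finset (Fin n)) (β : Fin p → ℝ) : Fin p → ℝ :=
  fun j => (n : ℝ)⁻¹ *
    ∑ i ∈ D, (z i j - (∑ k ∈ R i, Real.exp (z k ⬝ᵥ β) * z k j) / coxS0 z R i β)

/-- The information matrix
`J(β) = (1/n) Σ_{i ∈ D} (S²_i(β)/S⁰_i(β) − (S¹_i(β)/S⁰_i(β))(S¹_i(β)/S⁰_i(β))ᵀ)`. -/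
noncomputable def coxJ {n p : ℕ} (z : Fin n → Fin p → ℝ) (D : Finset (Fin n))
    (R : Fin n → Finset (Fin n)) (β : Fin p → ℝ) : Matrix (Fin p) (Fin p) ℝ :=
  fun a b => (n : ℝ)⁻¹ *
    ∑ i ∈ D,
      ((∑ k ∈ R i, Real.exp (z k ⬝ᵥ β) * z k a * z k b) / coxS0 z R i β -
        ((∑ k ∈ R i, Real.exp (z k ⬝ᵥ β) * z k a) / coxS0 z R i β) *
          ((∑ k ∈ R i, Real.exp (z k ⬝ᵥ β) * z k b) / coxS0 z R i β))

/-- Compatibility factor `κ(T₀; M) = inf_{0 ≠ h ∈ C_{T₀}} √|T₀| (hᵀMh)^{1/2} / ‖h_{T₀}‖₁`. -/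
noncomputable def kappa {p : ℕ} (T0 : Finset (Fin p)) (M : Matrix (Fin p) (Fin p) ℝ) : ℝ :=
  sInf {x | ∃ h : Fin p → ℝ, h ≠ 0 ∧ coneC T0 h ∧
    x = Real.sqrt (T0.card) * Real.sqrt (quad M h) / l1 (restr T0 h)}

/-- Restricted eigenvalue `RE(T₀; M) = inf_{0 ≠ h ∈ C_{T₀}} (hᵀMh)^{1/2} / ‖h‖₂`. -/
noncomputable def RE {p : ℕ} (T0 : Finset (Fin p)) (M : Matrix (Fin p) (Fin p) ℝ) : ℝ :=
  sInf {x | ∃ h : Fin p → ℝ, h ≠ 0 ∧ coneC T0 h ∧ x = Real.sqrt (quad M h) / l2 h}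

/-- Weak cone invertibility factor
`F_q(T₀; M) = inf_{0 ≠ h ∈ C_{T₀}} |T₀|^{1/q} (hᵀMh) / (‖h_{T₀}‖₁ ‖h‖_q)`. -/
noncomputable def Fq {p : ℕ} (q : ℝ) (T0 : Finset (Fin p)) (M : Matrix (Fin p) (Fin p) ℝ) : ℝ :=
  sInf {x | ∃ h : Fin p → ℝ, h ≠ 0 ∧ coneC T0 h ∧
    x = (T0.card : ℝ) ^ (1 / q) * quad M h / (l1 (restr T0 h) * lqNorm q h)}

open Finset

noncomputable def cw {ι : Type*} (s : Finset ι) (c b : ι → ℝ) (t : ℝ) : ℝ :=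
  ∑ k ∈ s, c k * Real.exp (t * b k)

noncomputable def cV {ι : Type*} (s : Finset ι) (c b : ι → ℝ) (t : ℝ) : ℝ :=
  cw s (fun k => c k * b k ^ 2) b t / cw s c b t
    - (cw s (fun k => c k * b k) b t / cw s c b t) ^ 2

variable {ι : Type*} {s : Finset ι} {c b : ι → ℝ} {t : ℝ}

lemma cw_pos (hs : s.Nonempty) (hc : ∀ k ∈ s, 0 < c k) : 0 < cw s c b t :=
  Finset.sum_pos (fun k hk => mul_pos (hc k hk) (Real.exp_pos _)) hs

lemma hasDerivAt_cw (s : Finset ι) (c b : ι → ℝ) (t : ℝ) :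
    HasDerivAt (fun u => cw s c b u) (cw s (fun k => c k * b k) b t) t := by
  unfold cw
  apply HasDerivAt.fun_sum
  intro k _
  have h1 : HasDerivAt (fun u : ℝ => u * b k) (b k) t := hasDerivAt_mul_const (b k)
  have h2 := (h1.exp).const_mul (c k)
  refine h2.congr_deriv (Eq.symm ?_)
  ring

lemma cw_congr {c' : ι → ℝ} (h : ∀ k, c k = c' k) : cw s c b t = cw s c' b t := by
  unfold cw; exact Finset.sum_congr rfl fun k _ => by rw [h k]

lemma hasDerivAt_ratio (hS : cw s c b t ≠ 0) :
    HasDerivAt (fun u => cw s (fun k => c k * b k) b u / cw s c b u) (cV s c b t) t := by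
  have h1 := hasDerivAt_cw s (fun k => c k * b k) b t
  have h2 := hasDerivAt_cw s c b t
  have h3 := h1.div h2 hS
  have e1 : cw s (fun k => (fun k => c k * b k) k * b k) b t
      = cw s (fun k => c k * b k ^ 2) b t := cw_congr fun k => by ring
  rw [e1] at h3
  refine h3.congr_deriv (Eq.symm ?_)
  unfold cV
  field_simp

lemma hasDerivAt_cV (hS : cw s c b t ≠ 0) :
    HasDerivAt (fun u => cV s c b u)
      ((cw s (fun k => c k * b k ^ 3) b t * cw s c b t
          - cw s (fun k => c k * b k ^ 2) b t * cw s (fun k => c k * b k) b t)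
          / cw s c b t ^ 2
        - 2 * (cw s (fun k => c k * b k) b t / cw s c b t)
          * cV s c b t) t := by
  unfold cV
  have h2 := hasDerivAt_cw s c b t
  have hM := hasDerivAt_cw s (fun k => c k * b k ^ 2) b t
  have eM : cw s (fun k => (fun k => c k * b k ^ 2) k * b k) b t
      = cw s (fun k => c k * b k ^ 3) b t := cw_congr fun k => by ring
  rw [eM] at hM
  have hdiv1 := hM.div h2 hS
  have hratio := hasDerivAt_ratio hS
  have hpow := hratio.pow 2
  have := hdiv1.sub hpow
  refine this.congr_deriv (Eq.symm ?_)
  unfold cV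
  norm_num

lemma cV_nonneg (hs : s.Nonempty) (hc : ∀ k ∈ s, 0 < c k) : 0 ≤ cV s c b t := by
  have hS : 0 < cw s c b t := cw_pos hs hc
  have hCS := Finset.sum_mul_sq_le_sq_mul_sq s
    (fun k => Real.sqrt (c k * Real.exp (t * b k)))
    (fun k => Real.sqrt (c k * Real.exp (t * b k)) * b k)
  have e1 : ∑ k ∈ s, Real.sqrt (c k * Real.exp (t * b k)) *
      (Real.sqrt (c k * Real.exp (t * b k)) * b k) = cw s (fun k => c k * b k) b t := by
    unfold cw; refine Finset.sum_congr rfl fun k hk => ?_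
    rw [← mul_assoc, Real.mul_self_sqrt (le_of_lt (mul_pos (hc k hk) (Real.exp_pos _)))]
    ring
  have e2 : ∑ k ∈ s, (Real.sqrt (c k * Real.exp (t * b k))) ^ 2 = cw s c b t := by
    unfold cw; refine Finset.sum_congr rfl fun k hk => ?_
    rw [Real.sq_sqrt (le_of_lt (mul_pos (hc k hk) (Real.exp_pos _)))]
  have e3 : ∑ k ∈ s, (Real.sqrt (c k * Real.exp (t * b k)) * b k) ^ 2
      = cw s (fun k => c k * b k ^ 2) b t := by
    unfold cw; refine Finset.sum_congr rfl fun k hk => ?_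
    rw [mul_pow, Real.sq_sqrt (le_of_lt (mul_pos (hc k hk) (Real.exp_pos _)))]
    ring
  rw [e1, e2, e3] at hCS
  unfold cV
  rw [div_pow, sub_nonneg, div_le_div_iff₀ (by positivity) hS]
  nlinarith [hCS, hS]

lemma cV_lower (hs : s.Nonempty) (hc : ∀ k ∈ s, 0 < c k) {B : ℝ}
    (hb : ∀ k ∈ s, |b k| ≤ B) (ht0 : 0 ≤ t) (ht1 : t ≤ 1) :
    Real.exp (-(2 * B)) * cV s c b 0 ≤ cV s c b t := by
  obtain ⟨k₀, hk₀⟩ := hs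
  have hB : 0 ≤ B := le_trans (abs_nonneg _) (hb _ hk₀)
  set G : ℝ → ℝ := fun u => Real.exp (2 * B * u) * cV s c b u with hGdef
  have key : ∀ u : ℝ, HasDerivAt G
      (Real.exp (2 * B * u) * (2 * B * cV s c b u +
        ((cw s (fun k => c k * b k ^ 3) b u * cw s c b u
          - cw s (fun k => c k * b k ^ 2) b u * cw s (fun k => c k * b k) b u)
          / cw s c b u ^ 2
        - 2 * (cw s (fun k => c k * b k) b u / cw s c b u) * cV s c b u))) u := by
    intro u
    have hS : 0 < cw s c b u := cw_pos ⟨k₀, hk₀⟩ hc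
    have h1 : HasDerivAt (fun v : ℝ => Real.exp (2 * B * v)) (Real.exp (2 * B * u) * (2 * B)) u := by
      simpa using ((hasDerivAt_id u).const_mul (2 * B)).exp
    have h2 := hasDerivAt_cV (s := s) (c := c) (b := b) (t := u) (ne_of_gt hS)
    have := h1.mul h2
    refine this.congr_deriv (Eq.symm ?_)
    ring
  have dnn : ∀ u : ℝ, 0 ≤ 2 * B * cV s c b u +
      ((cw s (fun k => c k * b k ^ 3) b u * cw s c b u
        - cw s (fun k => c k * b k ^ 2) b u * cw s (fun k => c k * b k) b u)
        / cw s c b u ^ 2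
      - 2 * (cw s (fun k => c k * b k) b u / cw s c b u) * cV s c b u) := by
    intro u
    have hS : 0 < cw s c b u := cw_pos ⟨k₀, hk₀⟩ hc
    set μ : ℝ := cw s (fun k => c k * b k) b u / cw s c b u with hμ
    have expand : ∑ k ∈ s, c k * Real.exp (u * b k) * ((b k - μ) ^ 2 * (b k - μ + 2 * B))
        = cw s (fun k => c k * b k ^ 3) b u + (2 * B - 3 * μ) * cw s (fun k => c k * b k ^ 2) b u
          + (3 * μ ^ 2 - 4 * B * μ) * cw s (fun k => c k * b k) b u
          + (2 * B * μ ^ 2 - μ ^ 3) * cw s c b u := by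
      unfold cw
      rw [Finset.mul_sum, Finset.mul_sum, Finset.mul_sum, ← Finset.sum_add_distrib,
        ← Finset.sum_add_distrib, ← Finset.sum_add_distrib]
      exact Finset.sum_congr rfl fun k _ => by ring
    have hid : 2 * B * cV s c b u +
        ((cw s (fun k => c k * b k ^ 3) b u * cw s c b u
          - cw s (fun k => c k * b k ^ 2) b u * cw s (fun k => c k * b k) b u)
          / cw s c b u ^ 2
        - 2 * (cw s (fun k => c k * b k) b u / cw s c b u) * cV s c b u)
        = (∑ k ∈ s, c k * Real.exp (u * b k) * ((b k - μ) ^ 2 * (b k - μ + 2 * B)))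
          / cw s c b u := by
      rw [expand]
      unfold cV
      rw [hμ]
      field_simp
      ring
    rw [hid]
    apply div_nonneg _ (le_of_lt hS)
    apply Finset.sum_nonneg
    intro k hk
    have hbk := abs_le.mp (hb k hk)
    have hμB : μ ≤ B := by
      rw [hμ, div_le_iff₀ hS]
      unfold cw
      rw [Finset.mul_sum]
      apply Finset.sum_le_sum
      intro j hj
      have hbj := (abs_le.mp (hb j hj)).2
      have he := Real.exp_pos (u * b j)
      simp only []
      nlinarith [mul_nonneg (mul_nonneg (sub_nonneg.mpr hbj) (le_of_lt (hc j hj))) (le_of_lt he)]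
    have hfac : 0 ≤ b k - μ + 2 * B := by linarith [hbk.1]
    have := Real.exp_pos (u * b k)
    have := hc k hk
    positivity
  have hdiff : Differentiable ℝ G := fun u => (key u).differentiableAt
  have hmono : Monotone G := by
    apply monotone_of_deriv_nonneg hdiff
    intro u
    rw [(key u).deriv]
    exact mul_nonneg (Real.exp_pos _).le (dnn u)
  have hG0 : G 0 = cV s c b 0 := by simp [hGdef]
  have hGt := hmono ht0
  rw [hG0] at hGt
  have hV0 : 0 ≤ cV s c b 0 := cV_nonneg ⟨k₀, hk₀⟩ hc
  calc Real.exp (-(2 * B)) * cV s c b 0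
      ≤ Real.exp (-(2 * B * t)) * cV s c b 0 := by
        apply mul_le_mul_of_nonneg_right _ hV0
        apply Real.exp_le_exp.mpr
        nlinarith
    _ ≤ Real.exp (-(2 * B * t)) * (Real.exp (2 * B * t) * cV s c b t) :=
        mul_le_mul_of_nonneg_left hGt (Real.exp_pos _).le
    _ = cV s c b t := by
        rw [← mul_assoc, ← Real.exp_add]
        simp

lemma sum_ratio_diff_ge {ν : Type*} (D : Finset ν) (s : ν → Finset ι)
    (hs : ∀ i ∈ D, (s i).Nonempty) (c b : ι → ℝ) (hc : ∀ k, 0 < c k)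
    (B : ℝ) (hb : ∀ k, |b k| ≤ B) :
    Real.exp (-(2 * B)) * (∑ i ∈ D, cV (s i) c b 0) ≤
      (∑ i ∈ D, cw (s i) (fun k => c k * b k) b 1 / cw (s i) c b 1)
      - (∑ i ∈ D, cw (s i) (fun k => c k * b k) b 0 / cw (s i) c b 0) := by
  set W : ℝ := ∑ i ∈ D, cV (s i) c b 0 with hW
  set a : ℝ := Real.exp (-(2 * B)) * W with ha
  set F : ℝ → ℝ := fun u => ∑ i ∈ D, cw (s i) (fun k => c k * b k) b u / cw (s i) c b u
    with hF
  set H : ℝ → ℝ := fun u => F u - a * u with hH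
  have hFderiv : ∀ u : ℝ, HasDerivAt F (∑ i ∈ D, cV (s i) c b u) u := by
    intro u
    apply HasDerivAt.fun_sum
    intro i hi
    exact hasDerivAt_ratio (ne_of_gt (cw_pos (hs i hi) (fun k _ => hc k)))
  have hHderiv : ∀ u : ℝ, HasDerivAt H ((∑ i ∈ D, cV (s i) c b u) - a) u := by
    intro u
    have := (hFderiv u).sub ((hasDerivAt_id u).const_mul a)
    have e : (∑ i ∈ D, cV (s i) c b u) - a * 1 = (∑ i ∈ D, cV (s i) c b u) - a := by ring
    exact this.congr_deriv e
  have hmono : MonotoneOn H (Set.Icc (0 : ℝ) 1) := by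
    apply monotoneOn_of_deriv_nonneg (convex_Icc 0 1)
    · exact Continuous.continuousOn (by
        have : Differentiable ℝ H := fun u => (hHderiv u).differentiableAt
        exact this.continuous)
    · intro u _
      exact (hHderiv u).differentiableAt.differentiableWithinAt
    · intro u hu
      rw [interior_Icc] at hu
      rw [(hHderiv u).deriv, sub_nonneg, ha]
      rw [Finset.mul_sum]
      apply Finset.sum_le_sum
      intro i hi
      exact cV_lower (hs i hi) (fun k _ => hc k) (fun k _ => hb k) (le_of_lt hu.1)
        (le_of_lt hu.2)
  have h01 := hmono (Set.mem_Icc.mpr ⟨le_refl 0, zero_le_one⟩)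
    (Set.mem_Icc.mpr ⟨zero_le_one, le_refl 1⟩) zero_le_one
  simp only [hH, hF, mul_zero, mul_one, sub_zero] at h01
  linarith
open Matrix Finset

variable {n p : ℕ} (z : Fin n → Fin p → ℝ) (s : Finset (Fin n)) (h : Fin p → ℝ)
  (E : Fin n → ℝ) (S : ℝ)

lemma swapB : ∑ a, h a * ∑ k ∈ s, E k * z k a = ∑ k ∈ s, E k * (z k ⬝ᵥ h) := by
  simp only [Finset.mul_sum, dotProduct]
  rw [Finset.sum_comm]
  exact Finset.sum_congr rfl fun k _ => Finset.sum_congr rfl fun j _ => by ring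

lemma swapA : ∑ a, ∑ b', h a * (∑ k ∈ s, E k * z k a * z k b') * h b'
    = ∑ k ∈ s, E k * (z k ⬝ᵥ h) ^ 2 := by
  have step : ∀ a b', h a * (∑ k ∈ s, E k * z k a * z k b') * h b'
      = ∑ k ∈ s, E k * ((z k a * h a) * (z k b' * h b')) := by
    intro a b'
    rw [Finset.mul_sum, Finset.sum_mul]
    exact Finset.sum_congr rfl fun k _ => by ring
  simp only [step]
  have inner : ∀ a : Fin p, ∑ b' : Fin p, ∑ k ∈ s, E k * ((z k a * h a) * (z k b' * h b'))
      = ∑ k ∈ s, ∑ b' : Fin p, E k * ((z k a * h a) * (z k b' * h b')) := fun a =>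
    Finset.sum_comm
  simp only [inner]
  rw [Finset.sum_comm]
  refine Finset.sum_congr rfl fun k _ => ?_
  have e : E k * (z k ⬝ᵥ h) ^ 2
      = E k * ((∑ a, z k a * h a) * (∑ b', z k b' * h b')) := by
    rw [dotProduct]; ring
  rw [e, Finset.sum_mul_sum]
  rw [Finset.mul_sum]
  refine Finset.sum_congr rfl fun a _ => ?_
  rw [Finset.mul_sum]

lemma quad_term : ∑ a, ∑ b', h a * ((∑ k ∈ s, E k * z k a * z k b') / S -
        ((∑ k ∈ s, E k * z k a) / S) * ((∑ k ∈ s, E k * z k b') / S)) * h b'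
      = (∑ k ∈ s, E k * (z k ⬝ᵥ h) ^ 2) / S - ((∑ k ∈ s, E k * (z k ⬝ᵥ h)) / S) ^ 2 := by
  have rhs2 : (∑ a, h a * ((∑ k ∈ s, E k * z k a) / S)) *
      (∑ b', h b' * ((∑ k ∈ s, E k * z k b') / S))
      = ∑ a, ∑ b', (h a * ((∑ k ∈ s, E k * z k a) / S)) *
        (h b' * ((∑ k ∈ s, E k * z k b') / S)) :=
    Finset.sum_mul_sum _ _ _ _
  have split : ∑ a, ∑ b', h a * ((∑ k ∈ s, E k * z k a * z k b') / S -
        ((∑ k ∈ s, E k * z k a) / S) * ((∑ k ∈ s, E k * z k b') / S)) * h b'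
      = (∑ a, ∑ b', h a * (∑ k ∈ s, E k * z k a * z k b') * h b') / S
        - (∑ a, h a * ((∑ k ∈ s, E k * z k a) / S)) *
          (∑ b', h b' * ((∑ k ∈ s, E k * z k b') / S)) := by
    rw [rhs2]
    simp only [← Finset.sum_sub_distrib, Finset.sum_div]
    refine Finset.sum_congr rfl fun a _ => ?_
    refine Finset.sum_congr rfl fun b' _ => ?_
    simp only [← Finset.sum_div]
    ring
  rw [split, swapA]
  have eB : (∑ a, h a * ((∑ k ∈ s, E k * z k a) / S))
      = (∑ k ∈ s, E k * (z k ⬝ᵥ h)) / S := by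
    rw [← swapB z s h E, Finset.sum_div]
    exact Finset.sum_congr rfl fun a _ => by ring
  rw [eB]
  ring

lemma l1_restr {p : ℕ} (T : Finset (Fin p)) (f : Fin p → ℝ) :
    l1 (restr T f) = ∑ j ∈ T, |f j| := by
  unfold l1 restr
  simp only [apply_ite abs, abs_zero]
  rw [Finset.sum_ite_mem, Finset.univ_inter]

lemma dotU {n p : ℕ} (z : Fin n → Fin p → ℝ) (D : Finset (Fin n))
    (R : Fin n → Finset (Fin n)) (β h : Fin p → ℝ) :
    ∑ j, h j * coxU z D R β j
      = (n : ℝ)⁻¹ * ∑ i ∈ D, ((z i ⬝ᵥ h)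
          - (∑ k ∈ R i, Real.exp (z k ⬝ᵥ β) * (z k ⬝ᵥ h)) / coxS0 z R i β) := by
  unfold coxU
  calc ∑ j, h j * ((n : ℝ)⁻¹ * ∑ i ∈ D,
        (z i j - (∑ k ∈ R i, Real.exp (z k ⬝ᵥ β) * z k j) / coxS0 z R i β))
      = (n : ℝ)⁻¹ * ∑ j, h j * ∑ i ∈ D,
          (z i j - (∑ k ∈ R i, Real.exp (z k ⬝ᵥ β) * z k j) / coxS0 z R i β) := by
        rw [Finset.mul_sum]
        exact Finset.sum_congr rfl fun j _ => by ring
    _ = (n : ℝ)⁻¹ * ∑ i ∈ D, ∑ j, h j *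
          (z i j - (∑ k ∈ R i, Real.exp (z k ⬝ᵥ β) * z k j) / coxS0 z R i β) := by
        congr 1
        simp only [Finset.mul_sum]
        exact Finset.sum_comm
    _ = _ := by
        congr 1
        refine Finset.sum_congr rfl fun i _ => ?_
        have e1 : ∑ j, h j *
            (z i j - (∑ k ∈ R i, Real.exp (z k ⬝ᵥ β) * z k j) / coxS0 z R i β)
            = (∑ j, z i j * h j) -
              (∑ j, h j * ∑ k ∈ R i, Real.exp (z k ⬝ᵥ β) * z k j) / coxS0 z R i β := by
          rw [Finset.sum_div, ← Finset.sum_sub_distrib]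
          exact Finset.sum_congr rfl fun j _ => by ring
        rw [e1, swapB]
        rfl

set_option maxHeartbeats 1000000 in
/-- `l₂` bound via the restricted eigenvalue. -/
theorem stmt8 {n p : ℕ} (z : Fin n → Fin p → ℝ) (D : Finset (Fin n))
    (R : Fin n → Finset (Fin n)) (hR : ∀ i ∈ D, (R i).Nonempty)
    (K₁ : ℝ) (hz : ∀ i j, |z i j| ≤ K₁)
    (β₀ : Fin p → ℝ) (T0 : Finset (Fin p)) (hT0 : ∀ j, j ∈ T0 ↔ β₀ j ≠ 0)
    (S : ℕ) (hS : T0.card = S) (hS1 : 1 ≤ S)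
    (βhat : Fin p → ℝ) (γ : ℝ) (hγ : 0 ≤ γ)
    (hU0 : linf (coxU z D R β₀) ≤ γ) (hUhat : linf (coxU z D R βhat) ≤ γ)
    (hl1 : l1 βhat ≤ l1 β₀)
    (hRE : 0 < RE T0 (coxJ z D R β₀)) :
    l2 (βhat - β₀) ^ 2 ≤
      4 * γ * l1 β₀ * Real.exp (4 * K₁ * l1 β₀) / RE T0 (coxJ z D R β₀) ^ 2 := by
  classical
  have hl1nn : (0 : ℝ) ≤ l1 β₀ := Finset.sum_nonneg fun _ _ => abs_nonneg _
  set hv : Fin p → ℝ := βhat - β₀ with hhv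
  by_cases hv0 : hv = 0
  · rw [hv0]
    have : l2 (0 : Fin p → ℝ) = 0 := by simp [l2]
    rw [this]
    have h2 : (0:ℝ) ^ 2 = 0 := by norm_num
    rw [h2]
    apply div_nonneg _ (by positivity)
    positivity
  · set c : Fin n → ℝ := fun k => Real.exp (z k ⬝ᵥ β₀) with hc
    set b : Fin n → ℝ := fun k => z k ⬝ᵥ hv with hbdef
    set B : ℝ := K₁ * l1 hv with hBdef
    have hl1hv : 0 ≤ l1 hv := Finset.sum_nonneg fun _ _ => abs_nonneg _
    obtain ⟨j₀, hj₀⟩ : ∃ j, hv j ≠ 0 := Function.ne_iff.mp hv0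
    have hvj : ∀ j, hv j = βhat j - β₀ j := fun j => rfl
    have hβ : βhat = β₀ + hv := by
      funext j; simp only [Pi.add_apply, hvj j]; ring
    -- the cone property
    have hcone : coneC T0 hv := by
      unfold coneC
      rw [l1_restr, l1_restr]
      have hzero : ∀ j ∉ T0, β₀ j = 0 := fun j hj => not_not.mp (by simpa [hT0] using hj)
      have a1 : l1 β₀ = ∑ j ∈ T0, |β₀ j| := by
        unfold l1
        rw [← Finset.sum_subset (Finset.subset_univ T0)]
        intro j _ hj
        rw [hzero j hj, abs_zero]
      have a2 : ∑ j ∈ T0, |βhat j| + ∑ j ∈ T0ᶜ, |βhat j| = l1 βhat :=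
        Finset.sum_add_sum_compl T0 _
      have a3 : ∑ j ∈ T0ᶜ, |βhat j| = ∑ j ∈ T0ᶜ, |hv j| := by
        refine Finset.sum_congr rfl fun j hj => ?_
        rw [hvj j, hzero j (Finset.mem_compl.mp hj), sub_zero]
      have a4 : ∑ j ∈ T0, |β₀ j| ≤ ∑ j ∈ T0, |βhat j| + ∑ j ∈ T0, |hv j| := by
        rw [← Finset.sum_add_distrib]
        refine Finset.sum_le_sum fun j _ => ?_
        have h1 := abs_sub_abs_le_abs_sub (β₀ j) (βhat j)
        have e : |β₀ j - βhat j| = |hv j| := by rw [hvj j, abs_sub_comm]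
        linarith
      linarith [a1, a2, a3, a4, hl1]
    -- positivity of l2
    have hsum_pos : 0 < ∑ j, hv j ^ 2 :=
      Finset.sum_pos' (fun i _ => sq_nonneg _) ⟨j₀, Finset.mem_univ _, by positivity⟩
    have hl2pos : 0 < l2 hv := Real.sqrt_pos.mpr hsum_pos
    -- quadratic form identity
    set W : ℝ := ∑ i ∈ D, cV (R i) c b 0 with hW
    have hquad : quad (coxJ z D R β₀) hv = (n : ℝ)⁻¹ * W := by
      have cw0 : ∀ (X : Fin n → ℝ) (s : Finset (Fin n)), cw s X b 0 = ∑ k ∈ s, X k := by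
        intro X s; unfold cw; simp
      have e0 : quad (coxJ z D R β₀) hv = ∑ a, ∑ b', hv a * coxJ z D R β₀ a b' * hv b' := by
        simp only [quad, Matrix.mulVec, dotProduct, Finset.mul_sum]
        exact Finset.sum_congr rfl fun a _ => Finset.sum_congr rfl fun b' _ => by ring
      have hstep : ∀ a b', hv a * coxJ z D R β₀ a b' * hv b'
          = ∑ i ∈ D, (n : ℝ)⁻¹ * (hv a *
              ((∑ k ∈ R i, Real.exp (z k ⬝ᵥ β₀) * z k a * z k b') / coxS0 z R i β₀ -
              ((∑ k ∈ R i, Real.exp (z k ⬝ᵥ β₀) * z k a) / coxS0 z R i β₀) *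
                ((∑ k ∈ R i, Real.exp (z k ⬝ᵥ β₀) * z k b') / coxS0 z R i β₀)) * hv b') := by
        intro a b'
        have hJ : coxJ z D R β₀ a b' = (n : ℝ)⁻¹ * ∑ i ∈ D,
            ((∑ k ∈ R i, Real.exp (z k ⬝ᵥ β₀) * z k a * z k b') / coxS0 z R i β₀ -
            ((∑ k ∈ R i, Real.exp (z k ⬝ᵥ β₀) * z k a) / coxS0 z R i β₀) *
              ((∑ k ∈ R i, Real.exp (z k ⬝ᵥ β₀) * z k b') / coxS0 z R i β₀)) := rfl
        rw [hJ, Finset.mul_sum, Finset.mul_sum, Finset.sum_mul]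
        exact Finset.sum_congr rfl fun i _ => by ring
      rw [e0]
      simp only [hstep]
      have sw1 : ∀ a : Fin p, (∑ b' : Fin p, ∑ i ∈ D, (n : ℝ)⁻¹ * (hv a *
          ((∑ k ∈ R i, Real.exp (z k ⬝ᵥ β₀) * z k a * z k b') / coxS0 z R i β₀ -
          ((∑ k ∈ R i, Real.exp (z k ⬝ᵥ β₀) * z k a) / coxS0 z R i β₀) *
            ((∑ k ∈ R i, Real.exp (z k ⬝ᵥ β₀) * z k b') / coxS0 z R i β₀)) * hv b'))
          = ∑ i ∈ D, ∑ b' : Fin p, (n : ℝ)⁻¹ * (hv a *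
          ((∑ k ∈ R i, Real.exp (z k ⬝ᵥ β₀) * z k a * z k b') / coxS0 z R i β₀ -
          ((∑ k ∈ R i, Real.exp (z k ⬝ᵥ β₀) * z k a) / coxS0 z R i β₀) *
            ((∑ k ∈ R i, Real.exp (z k ⬝ᵥ β₀) * z k b') / coxS0 z R i β₀)) * hv b') :=
        fun a => Finset.sum_comm
      simp only [sw1]
      rw [Finset.sum_comm]
      rw [hW, Finset.mul_sum]
      refine Finset.sum_congr rfl fun i hi => ?_
      have pull : ∀ (f : Fin p → Fin p → ℝ), (∑ a, ∑ b', (n : ℝ)⁻¹ * f a b')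
          = (n : ℝ)⁻¹ * ∑ a, ∑ b', f a b' := by
        intro f
        rw [Finset.mul_sum]
        exact Finset.sum_congr rfl fun a _ => by rw [Finset.mul_sum]
      rw [pull]
      congr 1
      rw [quad_term z (R i) hv (fun k => Real.exp (z k ⬝ᵥ β₀)) (coxS0 z R i β₀)]
      unfold cV
      rw [cw0, cw0, cw0]
      rfl
    have hWnn : 0 ≤ W :=
      Finset.sum_nonneg fun i hi => cV_nonneg (hR i hi) (fun k _ => Real.exp_pos _)
    have hquadnn : 0 ≤ quad (coxJ z D R β₀) hv := by
      rw [hquad]; positivity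
    -- restricted eigenvalue bound
    have hmem : Real.sqrt (quad (coxJ z D R β₀) hv) / l2 hv ∈
        {x | ∃ h : Fin p → ℝ, h ≠ 0 ∧ coneC T0 h ∧
          x = Real.sqrt (quad (coxJ z D R β₀) h) / l2 h} := ⟨hv, hv0, hcone, rfl⟩
    have hbdd : BddBelow {x | ∃ h : Fin p → ℝ, h ≠ 0 ∧ coneC T0 h ∧
        x = Real.sqrt (quad (coxJ z D R β₀) h) / l2 h} := by
      refine ⟨0, fun x hx => ?_⟩
      obtain ⟨h', -, -, rfl⟩ := hx
      exact div_nonneg (Real.sqrt_nonneg _) (Real.sqrt_nonneg _)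
    have hρle : RE T0 (coxJ z D R β₀) ≤
        Real.sqrt (quad (coxJ z D R β₀) hv) / l2 hv := csInf_le hbdd hmem
    have h2 : RE T0 (coxJ z D R β₀) * l2 hv ≤ Real.sqrt (quad (coxJ z D R β₀) hv) :=
      (le_div_iff₀ hl2pos).mp hρle
    have h3 : RE T0 (coxJ z D R β₀) ^ 2 * l2 hv ^ 2 ≤ quad (coxJ z D R β₀) hv := by
      have hmul := mul_le_mul h2 h2 (by positivity) (Real.sqrt_nonneg _)
      rw [Real.mul_self_sqrt hquadnn] at hmul
      nlinarith [hmul]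
    -- upper bound on the quadratic form
    have hl1hv2 : l1 hv ≤ 2 * l1 β₀ := by
      have hstep : l1 hv ≤ l1 βhat + l1 β₀ := by
        unfold l1
        rw [← Finset.sum_add_distrib]
        refine Finset.sum_le_sum fun j _ => ?_
        rw [hvj j]
        exact abs_sub _ _
      linarith
    have hquadub : quad (coxJ z D R β₀) hv ≤ 4 * γ * l1 β₀ * Real.exp (4 * K₁ * l1 β₀) := by
      have hrhs : (0:ℝ) ≤ 4 * γ * l1 β₀ * Real.exp (4 * K₁ * l1 β₀) := by positivity
      rcases Nat.eq_zero_or_pos n with hn | hn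
      · have hD : D = ∅ := Finset.eq_empty_of_forall_notMem fun i _ =>
          absurd i.isLt (by omega)
        rw [hquad, hW, hD]
        simpa using hrhs
      · have hK : 0 ≤ K₁ := le_trans (abs_nonneg _) (hz ⟨0, hn⟩ j₀)
        have hBnn : 0 ≤ B := by rw [hBdef]; positivity
        have hbb : ∀ k, |b k| ≤ B := by
          intro k
          simp only [hbdef, hBdef]
          calc |z k ⬝ᵥ hv| = |∑ j, z k j * hv j| := rfl
            _ ≤ ∑ j, |z k j * hv j| := Finset.abs_sum_le_sum_abs _ _
            _ ≤ ∑ j, K₁ * |hv j| := Finset.sum_le_sum fun j _ => by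
                rw [abs_mul]
                exact mul_le_mul_of_nonneg_right (hz k j) (abs_nonneg _)
            _ = K₁ * l1 hv := by unfold l1; rw [Finset.mul_sum]
        have hcpos : ∀ k, 0 < c k := fun k => by
          simp only [hc]; exact Real.exp_pos _
        set F1 : ℝ := ∑ i ∈ D, cw (R i) (fun k => c k * b k) b 1 / cw (R i) c b 1 with hF1
        set F0 : ℝ := ∑ i ∈ D, cw (R i) (fun k => c k * b k) b 0 / cw (R i) c b 0 with hF0
        have key : Real.exp (-(2 * B)) * W ≤ F1 - F0 :=
          sum_ratio_diff_ge D R hR c b hcpos B hbb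
        have hW2 : W ≤ Real.exp (2 * B) * (F1 - F0) := by
          have hm := mul_le_mul_of_nonneg_left key (Real.exp_pos (2 * B)).le
          rw [← mul_assoc, ← Real.exp_add] at hm
          simpa using hm
        have hcw0S : ∀ i, cw (R i) c b 0 = coxS0 z R i β₀ := by
          intro i; unfold cw coxS0
          refine Finset.sum_congr rfl fun k _ => ?_
          simp [hc]
        have hcw0N : ∀ i, cw (R i) (fun k => c k * b k) b 0
            = ∑ k ∈ R i, Real.exp (z k ⬝ᵥ β₀) * (z k ⬝ᵥ hv) := by
          intro i; unfold cw
          refine Finset.sum_congr rfl fun k _ => ?_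
          simp [hc, hbdef]
        have hdots : ∀ k : Fin n, z k ⬝ᵥ βhat = z k ⬝ᵥ β₀ + z k ⬝ᵥ hv := fun k => by
          rw [hβ, dotProduct_add]
        have hcw1S : ∀ i, cw (R i) c b 1 = coxS0 z R i βhat := by
          intro i; unfold cw coxS0
          refine Finset.sum_congr rfl fun k _ => ?_
          rw [hdots k, Real.exp_add]
          simp [hc, hbdef]
        have hcw1N : ∀ i, cw (R i) (fun k => c k * b k) b 1
            = ∑ k ∈ R i, Real.exp (z k ⬝ᵥ βhat) * (z k ⬝ᵥ hv) := by
          intro i; unfold cw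
          refine Finset.sum_congr rfl fun k _ => ?_
          rw [hdots k, Real.exp_add]
          simp only [hc, hbdef, one_mul]
          ring
        have hd0 := dotU z D R β₀ hv
        have hd1 := dotU z D R βhat hv
        have hdiff : (∑ j, hv j * coxU z D R β₀ j) - (∑ j, hv j * coxU z D R βhat j)
            = (n : ℝ)⁻¹ * (F1 - F0) := by
          rw [hd0, hd1, ← mul_sub, ← Finset.sum_sub_distrib, hF1, hF0,
            ← Finset.sum_sub_distrib]
          congr 1
          refine Finset.sum_congr rfl fun i hi => ?_
          rw [hcw1S i, hcw1N i, hcw0S i, hcw0N i]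
          ring
        have hUb : ∀ (β : Fin p → ℝ), linf (coxU z D R β) ≤ γ →
            |∑ j, hv j * coxU z D R β j| ≤ γ * l1 hv := by
          intro β hβγ
          calc |∑ j, hv j * coxU z D R β j| ≤ ∑ j, |hv j * coxU z D R β j| :=
                Finset.abs_sum_le_sum_abs _ _
            _ ≤ ∑ j, |hv j| * γ := by
                refine Finset.sum_le_sum fun j _ => ?_
                rw [abs_mul]
                refine mul_le_mul_of_nonneg_left ?_ (abs_nonneg _)
                calc |coxU z D R β j| ≤ linf (coxU z D R β) := by
                      unfold linf
                      exact le_ciSup (f := fun j => |coxU z D R β j|)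
                        (Set.Finite.bddAbove (Set.finite_range _)) j
                  _ ≤ γ := hβγ
            _ = γ * l1 hv := by
                unfold l1
                rw [Finset.mul_sum]
                exact Finset.sum_congr rfl fun j _ => by ring
        have b0 := hUb β₀ hU0
        have b1 := hUb βhat hUhat
        rw [hquad]
        calc (n : ℝ)⁻¹ * W ≤ (n : ℝ)⁻¹ * (Real.exp (2 * B) * (F1 - F0)) :=
              mul_le_mul_of_nonneg_left hW2 (by positivity)
          _ = Real.exp (2 * B) * ((n : ℝ)⁻¹ * (F1 - F0)) := by ring
          _ = Real.exp (2 * B) *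
              ((∑ j, hv j * coxU z D R β₀ j) - (∑ j, hv j * coxU z D R βhat j)) := by
              rw [hdiff]
          _ ≤ Real.exp (2 * B) * (2 * (γ * l1 hv)) := by
              refine mul_le_mul_of_nonneg_left ?_ (Real.exp_pos _).le
              have c0 := abs_le.mp b0
              have c1 := abs_le.mp b1
              linarith [c0.2, c1.1]
          _ ≤ Real.exp (4 * K₁ * l1 β₀) * (4 * γ * l1 β₀) := by
              have hexp : Real.exp (2 * B) ≤ Real.exp (4 * K₁ * l1 β₀) :=
                Real.exp_le_exp.mpr (by
                  rw [hBdef]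
                  have hm := mul_le_mul_of_nonneg_left hl1hv2 hK
                  linarith)
              refine mul_le_mul hexp ?_ (by positivity) (Real.exp_pos _).le
              have hm := mul_le_mul_of_nonneg_left hl1hv2 hγ
              linarith
          _ = 4 * γ * l1 β₀ * Real.exp (4 * K₁ * l1 β₀) := by ring
    -- conclude
    have hfin : l2 hv ^ 2 ≤ quad (coxJ z D R β₀) hv / RE T0 (coxJ z D R β₀) ^ 2 := by
      rw [le_div_iff₀ (pow_pos hRE 2)]
      nlinarith [h3]
    calc l2 hv ^ 2 ≤ quad (coxJ z D R β₀) hv / RE T0 (coxJ z D R β₀) ^ 2 := hfin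
      _ ≤ 4 * γ * l1 β₀ * Real.exp (4 * K₁ * l1 β₀) / RE T0 (coxJ z D R β₀) ^ 2 := by
          apply div_le_div_of_nonneg_right hquadub (pow_pos hRE 2).le
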